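/- For every prime p and every integer t ≥ 1, \(\overline{M}(p^t) = \sum_{j=1}^{p^t} f\left(\left\lfloor \frac{p^t}{j}\right\rfloor\right) - \sum_{j=1}^{p^{t-1}} f\left(\left\lfloor \frac{p^{t-1}}{j}\right\rfloor\right) + (p-1)\sum_{s=1}^{t} p^{s-1} \sum_{m=1}^{p^{t-s}} f\left(\left\lfloor \frac{p^t}{1+(m-1)p^s}\right\rfloor\right)\). -/
import Mathlib


open Finset

/-- `f m` is the number of nonempty subsets `A` of `{1, 2, ..., m}` whose elements are
relatively prime, i.e. the gcd of the elements of `A` is `1`. -/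
def f (m : ℕ) : ℕ :=
  ((Finset.Icc 1 m).powerset.filter (fun A => A.Nonempty ∧ A.gcd _root_.id = 1)).card

/-- `Mbar n = ∑ ((A) - 1, n)`, summed over all nonempty subsets `A` of `{1, 2, ..., n}`
such that the gcd `(A)` of the elements of `A` is relatively prime to `n`. -/
def Mbar (n : ℕ) : ℕ :=
  ∑ A ∈ (Finset.Icc 1 n).powerset.filter
      (fun A => A.Nonempty ∧ Nat.gcd (A.gcd _root_.id) n = 1),
    Nat.gcd (A.gcd _root_.id - 1) n

/-- Key arithmetic identity: `gcd a (p^t) = 1 + (p-1) * ∑_{s=1}^t p^(s-1) [p^s ∣ a]`. -/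
lemma key_gcd (p : ℕ) (hp : p.Prime) (a t : ℕ) :
    (Nat.gcd a (p ^ t) : ℤ) =
      1 + ((p : ℤ) - 1) * ∑ s ∈ Icc 1 t, (p : ℤ) ^ (s - 1) * (if p ^ s ∣ a then 1 else 0) := by
  induction t with
  | zero => simp
  | succ t ih =>
    rw [Finset.sum_Icc_succ_top (by omega : 1 ≤ t + 1)]
    by_cases h : p ^ (t + 1) ∣ a
    · have h1 : p ^ t ∣ a := dvd_trans (pow_dvd_pow p (by omega)) h
      rw [Nat.gcd_eq_right h1] at ih
      rw [Nat.gcd_eq_right h, if_pos h]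
      push_cast
      rw [pow_succ]
      push_cast at ih
      linear_combination ih
    · have hg : Nat.gcd a (p ^ (t + 1)) = Nat.gcd a (p ^ t) := by
        apply Nat.dvd_antisymm
        · obtain ⟨k, hk, he⟩ := (Nat.dvd_prime_pow hp).mp (Nat.gcd_dvd_right a (p ^ (t+1)))
          have hka : p ^ k ∣ a := he ▸ Nat.gcd_dvd_left a (p ^ (t+1))
          have hk' : k ≤ t := by
            by_contra hc
            have : k = t + 1 := by omega
            exact h (this ▸ hka)
          exact Nat.dvd_gcd (Nat.gcd_dvd_left _ _) (he ▸ pow_dvd_pow p hk')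
        · exact Nat.dvd_gcd (Nat.gcd_dvd_left _ _)
            (dvd_trans (Nat.gcd_dvd_right _ _) (pow_dvd_pow p (by omega)))
      rw [hg, if_neg h, ih]
      ring

/-- The number of nonempty subsets of `{1,...,n}` with gcd exactly `d` is `f (n / d)`. -/
lemma fiber_card (n d : ℕ) (hd : 1 ≤ d) :
    ((Finset.Icc 1 n).powerset.filter (fun A => A.Nonempty ∧ A.gcd _root_.id = d)).card
      = f (n / d) := by
  unfold f
  symm
  apply Finset.card_bij (fun B _ => B.image (· * d))
  · intro B hB
    simp only [Finset.mem_filter, Finset.mem_powerset] at hB ⊢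
    obtain ⟨hsub, hne, hgcd⟩ := hB
    refine ⟨?_, hne.image _, ?_⟩
    · intro x hx
      simp only [Finset.mem_image] at hx
      obtain ⟨y, hy, rfl⟩ := hx
      have := hsub hy
      simp only [Finset.mem_Icc] at this ⊢
      constructor
      · simpa using Nat.mul_le_mul this.1 hd
      · calc y * d ≤ n / d * d := Nat.mul_le_mul_right d this.2
          _ ≤ n := Nat.div_mul_le_self n d
    · rw [Finset.gcd_image,
        show (_root_.id ∘ fun x : ℕ => x * d) = (fun x : ℕ => _root_.id x * d) from rfl,
        Finset.gcd_mul_right, hgcd]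
      simp
  · intro B₁ h₁ B₂ h₂ he
    exact Finset.image_injective (mul_left_injective₀ (by omega : d ≠ 0)) he
  · intro A hA
    simp only [Finset.mem_filter, Finset.mem_powerset] at hA
    obtain ⟨hsub, hne, hgcd⟩ := hA
    have hdvd : ∀ x ∈ A, d ∣ x := fun x hx => hgcd ▸ Finset.gcd_dvd hx
    have himg : (A.image (· / d)).image (· * d) = A := by
      rw [Finset.image_image]
      have : ∀ x ∈ A, (x / d) * d = x := fun x hx => Nat.div_mul_cancel (hdvd x hx)
      calc A.image (fun x => x / d * d) = A.image _root_.id := Finset.image_congr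
            (fun x hx => this x hx)
        _ = A := Finset.image_id
    refine ⟨A.image (· / d), ?_, himg⟩
    simp only [Finset.mem_filter, Finset.mem_powerset]
    refine ⟨?_, hne.image _, ?_⟩
    · intro x hx
      simp only [Finset.mem_image] at hx
      obtain ⟨y, hy, rfl⟩ := hx
      have hy' := hsub hy
      simp only [Finset.mem_Icc] at hy' ⊢
      constructor
      · exact (Nat.one_le_div_iff (by omega)).mpr (Nat.le_of_dvd (by omega) (hdvd y hy))
      · exact Nat.div_le_div_right hy'.2
    · have h1 : ((A.image (· / d)).image (· * d)).gcd _root_.id = d := by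
        rw [himg]; exact hgcd
      rw [Finset.gcd_image,
        show (_root_.id ∘ fun x : ℕ => x * d) = (fun x : ℕ => _root_.id x * d) from rfl,
        Finset.gcd_mul_right] at h1
      simp only [normalize_eq] at h1
      exact mul_right_cancel₀ (by omega : d ≠ 0) (h1.trans (one_mul d).symm)

/-- Grouping subsets by their gcd. -/
lemma Mbar_grouped (n : ℕ) (hn : 2 ≤ n) :
    Mbar n = ∑ d ∈ (Icc 1 n).filter (fun d => Nat.gcd d n = 1),
      Nat.gcd (d - 1) n * f (n / d) := by
  unfold Mbar
  have hmaps : ∀ A ∈ (Finset.Icc 1 n).powerset.filter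
      (fun A => A.Nonempty ∧ Nat.gcd (A.gcd _root_.id) n = 1),
      A.gcd _root_.id ∈ (Icc 1 n).filter (fun d => Nat.gcd d n = 1) := by
    intro A hA
    simp only [Finset.mem_filter, Finset.mem_powerset] at hA
    obtain ⟨hsub, hne, hcop⟩ := hA
    simp only [Finset.mem_filter, Finset.mem_Icc]
    obtain ⟨x, hx⟩ := hne
    have hx' := hsub hx
    simp only [Finset.mem_Icc] at hx'
    have hdvd : A.gcd _root_.id ∣ x := Finset.gcd_dvd hx
    have hpos : 1 ≤ A.gcd _root_.id := by
      rcases Nat.eq_zero_or_pos (A.gcd _root_.id) with h | h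
      · rw [h] at hcop; simp at hcop; omega
      · exact h
    exact ⟨⟨hpos, le_trans (Nat.le_of_dvd (by omega) hdvd) hx'.2⟩, hcop⟩
  have h := Finset.sum_fiberwise_of_maps_to (g := fun A : Finset ℕ => A.gcd _root_.id) hmaps
    (fun A : Finset ℕ => Nat.gcd (A.gcd _root_.id - 1) n)
  rw [← h]
  · apply Finset.sum_congr rfl
    intro d hd
    simp only [Finset.mem_filter, Finset.mem_Icc] at hd
    obtain ⟨⟨hd1, hdn⟩, hcop⟩ := hd
    have hsum : ∀ A ∈ ((Finset.Icc 1 n).powerset.filter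
        (fun A => A.Nonempty ∧ Nat.gcd (A.gcd _root_.id) n = 1)).filter
        (fun A => A.gcd _root_.id = d),
        Nat.gcd (A.gcd _root_.id - 1) n = Nat.gcd (d - 1) n := by
      intro A hA
      simp only [Finset.mem_filter] at hA
      rw [hA.2]
    have hset : ((Finset.Icc 1 n).powerset.filter
        (fun A => A.Nonempty ∧ Nat.gcd (A.gcd _root_.id) n = 1)).filter
        (fun A => A.gcd _root_.id = d)
        = (Finset.Icc 1 n).powerset.filter (fun A => A.Nonempty ∧ A.gcd _root_.id = d) := by
      rw [Finset.filter_filter]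
      apply Finset.filter_congr
      intro A _
      constructor
      · rintro ⟨⟨hne, _⟩, hgcd⟩; exact ⟨hne, hgcd⟩
      · rintro ⟨hne, hgcd⟩; exact ⟨⟨hne, hgcd ▸ hcop⟩, hgcd⟩
    rw [Finset.sum_congr rfl hsum, Finset.sum_const, smul_eq_mul, hset,
      fiber_card n d hd1, mul_comm]

/-- Reindexing multiples of `p` in `{1,...,p^t}`. -/
lemma step3 (p t : ℕ) (hp : 2 ≤ p) (ht : 1 ≤ t) :
    ∑ j ∈ (Icc 1 (p ^ t)).filter (fun j => p ∣ j), (f (p ^ t / j) : ℤ)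
      = ∑ j ∈ Icc 1 (p ^ (t - 1)), (f (p ^ (t - 1) / j) : ℤ) := by
  symm
  apply Finset.sum_nbij' (fun j => j * p) (fun j => j / p)
  · intro j hj
    simp only [Finset.mem_Icc] at hj
    simp only [Finset.mem_filter, Finset.mem_Icc]
    refine ⟨⟨by nlinarith, ?_⟩, dvd_mul_left p j⟩
    calc j * p ≤ p ^ (t - 1) * p := Nat.mul_le_mul_right p hj.2
      _ = p ^ t := by rw [← pow_succ]; congr 1; omega
  · intro j hj
    simp only [Finset.mem_filter, Finset.mem_Icc] at hj
    obtain ⟨⟨h1, h2⟩, hdvd⟩ := hj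
    simp only [Finset.mem_Icc]
    constructor
    · exact (Nat.one_le_div_iff (by omega)).mpr (Nat.le_of_dvd (by omega) hdvd)
    · rw [show p ^ t = p ^ (t-1) * p by rw [← pow_succ]; congr 1; omega] at h2
      calc j / p ≤ p ^ (t-1) * p / p := Nat.div_le_div_right h2
        _ = p ^ (t-1) := Nat.mul_div_cancel _ (by omega)
  · intro j hj
    exact Nat.mul_div_cancel j (by omega)
  · intro j hj
    simp only [Finset.mem_filter] at hj
    exact Nat.div_mul_cancel hj.2
  · intro j hj
    congr 2
    rw [mul_comm j p, ← Nat.div_div_eq_div_mul,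
      show p ^ t = p ^ (t-1) * p by rw [← pow_succ]; congr 1; omega,
      Nat.mul_div_cancel _ (by omega : 0 < p)]

/-- Reindexing the arithmetic progression `1 + (m-1)p^s`. -/
lemma step4 (p t s : ℕ) (hp : 2 ≤ p) (hst : s ≤ t) :
    ∑ m ∈ Icc 1 (p ^ (t - s)), (f (p ^ t / (1 + (m - 1) * p ^ s)) : ℤ)
      = ∑ d ∈ (Icc 1 (p ^ t)).filter (fun d => p ^ s ∣ (d - 1)), (f (p ^ t / d) : ℤ) := by
  have hps : 1 ≤ p ^ s := Nat.one_le_pow _ _ (by omega)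
  apply Finset.sum_nbij' (fun m => 1 + (m - 1) * p ^ s) (fun d => (d - 1) / p ^ s + 1)
  · intro m hm
    simp only [Finset.mem_Icc] at hm
    simp only [Finset.mem_filter, Finset.mem_Icc]
    refine ⟨⟨by omega, ?_⟩, by simp⟩
    have : (m - 1) * p ^ s ≤ (p ^ (t - s) - 1) * p ^ s := Nat.mul_le_mul_right _ (by omega)
    have h2 : (p ^ (t - s) - 1) * p ^ s = p ^ t - p ^ s := by
      rw [Nat.sub_mul, one_mul, ← pow_add]
      congr 2
      omega
    have hle : p ^ s ≤ p ^ t := Nat.pow_le_pow_right (by omega) hst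
    omega
  · intro d hd
    simp only [Finset.mem_filter, Finset.mem_Icc] at hd
    obtain ⟨⟨h1, h2⟩, hdvd⟩ := hd
    simp only [Finset.mem_Icc]
    refine ⟨Nat.le_add_left 1 _, ?_⟩
    obtain ⟨k, hk⟩ := hdvd
    rw [hk, Nat.mul_div_cancel_left k (by omega)]
    have hpt : p ^ t = p ^ (t - s) * p ^ s := by rw [← pow_add]; congr 1; omega
    by_contra hc
    push_neg at hc
    have h3 : p ^ t ≤ p ^ s * k := by
      rw [hpt, mul_comm]
      exact Nat.mul_le_mul_left _ (by omega)
    omega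
  · intro m hm
    simp only [Finset.mem_Icc] at hm
    rw [Nat.add_sub_cancel_left, Nat.mul_div_cancel _ (by omega)]
    omega
  · intro d hd
    simp only [Finset.mem_filter, Finset.mem_Icc] at hd
    obtain ⟨⟨h1, _⟩, hdvd⟩ := hd
    rw [Nat.add_sub_cancel, Nat.div_mul_cancel hdvd]
    omega
  · intro m hm
    rfl

theorem Mbar_prime_pow (p t : ℕ) (hp : p.Prime) (ht : 1 ≤ t) :
    (Mbar (p ^ t) : ℤ) =
      (∑ j ∈ Finset.Icc 1 (p ^ t), (f (p ^ t / j) : ℤ))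
      - (∑ j ∈ Finset.Icc 1 (p ^ (t - 1)), (f (p ^ (t - 1) / j) : ℤ))
      + ((p : ℤ) - 1) * ∑ s ∈ Finset.Icc 1 t, (p : ℤ) ^ (s - 1) *
          ∑ m ∈ Finset.Icc 1 (p ^ (t - s)), (f (p ^ t / (1 + (m - 1) * p ^ s)) : ℤ) := by
  have hp2 := hp.two_le
  have hn : 2 ≤ p ^ t :=
    le_trans hp2 (Nat.le_self_pow (by omega) p)
  set D := (Icc 1 (p ^ t)).filter (fun d => Nat.gcd d (p ^ t) = 1) with hD
  -- the left side, grouped by gcd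
  have hL : (Mbar (p ^ t) : ℤ) =
      ∑ d ∈ D, (Nat.gcd (d - 1) (p ^ t) : ℤ) * (f (p ^ t / d) : ℤ) := by
    rw [Mbar_grouped _ hn]
    push_cast
    rfl
  -- coprimality is the same as non-divisibility by p
  have hiff : ∀ j : ℕ, (¬ p ∣ j) ↔ Nat.gcd j (p ^ t) = 1 := by
    intro j
    constructor
    · intro h
      exact Nat.Coprime.pow_right t (Nat.coprime_comm.mp (hp.coprime_iff_not_dvd.mpr h))
    · intro h hd
      have hgd : p ∣ Nat.gcd j (p ^ t) :=
        Nat.dvd_gcd hd (dvd_pow_self p (by omega : t ≠ 0))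
      rw [h] at hgd
      exact absurd (Nat.le_of_dvd one_pos hgd) (by omega)
  have hfilter_eq : (Icc 1 (p ^ t)).filter (fun j => ¬ p ∣ j) = D := by
    rw [hD]
    apply Finset.filter_congr
    intro j _
    exact hiff j
  -- the first two terms
  have h12 : (∑ j ∈ Finset.Icc 1 (p ^ t), (f (p ^ t / j) : ℤ))
      - (∑ j ∈ Finset.Icc 1 (p ^ (t - 1)), (f (p ^ (t - 1) / j) : ℤ))
      = ∑ d ∈ D, (f (p ^ t / d) : ℤ) := by
    rw [← step3 p t hp2 ht,
      ← Finset.sum_filter_add_sum_filter_not (Icc 1 (p ^ t)) (fun j => p ∣ j)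
        (fun j => (f (p ^ t / j) : ℤ)), hfilter_eq]
    ring
  -- the third term
  have h3 : ((p : ℤ) - 1) * ∑ s ∈ Finset.Icc 1 t, (p : ℤ) ^ (s - 1) *
        ∑ m ∈ Finset.Icc 1 (p ^ (t - s)), (f (p ^ t / (1 + (m - 1) * p ^ s)) : ℤ)
      = ∑ d ∈ D, ((Nat.gcd (d - 1) (p ^ t) : ℤ) - 1) * (f (p ^ t / d) : ℤ) := by
    have e1 : ∀ s ∈ Icc 1 t, (p : ℤ) ^ (s - 1) *
        ∑ m ∈ Finset.Icc 1 (p ^ (t - s)), (f (p ^ t / (1 + (m - 1) * p ^ s)) : ℤ)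
        = ∑ d ∈ Icc 1 (p ^ t),
            ((p : ℤ) ^ (s - 1) * (if p ^ s ∣ (d - 1) then (1 : ℤ) else 0)) * (f (p ^ t / d) : ℤ) := by
      intro s hs
      simp only [Finset.mem_Icc] at hs
      rw [step4 p t s hp2 hs.2, Finset.sum_filter, Finset.mul_sum]
      apply Finset.sum_congr rfl
      intro d _
      split_ifs <;> ring
    rw [Finset.sum_congr rfl e1, Finset.sum_comm, Finset.mul_sum]
    -- now reduce to the per-`d` identity, then restrict the sum to `D`
    have e2 : ∀ d ∈ Icc 1 (p ^ t),
        ((p : ℤ) - 1) * ∑ s ∈ Icc 1 t,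
          ((p : ℤ) ^ (s - 1) * (if p ^ s ∣ (d - 1) then (1 : ℤ) else 0)) * (f (p ^ t / d) : ℤ)
        = ((Nat.gcd (d - 1) (p ^ t) : ℤ) - 1) * (f (p ^ t / d) : ℤ) := by
      intro d _
      rw [← Finset.sum_mul]
      have hk := key_gcd p hp (d - 1) t
      linear_combination (-(f (p ^ t / d) : ℤ)) * hk
    rw [Finset.sum_congr rfl e2]
    -- terms with `p ∣ d` vanish
    symm
    rw [hD]
    apply Finset.sum_filter_of_ne
    intro d hd hne
    simp only [Finset.mem_Icc] at hd
    by_contra hc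
    have hpd : p ∣ d := by
      by_contra h
      exact hc ((hiff d).mp h)
    have hnd : ¬ p ∣ (d - 1) := by
      intro h
      have h1 : p ∣ d - (d - 1) := Nat.dvd_sub hpd h
      have h2 : d - (d - 1) = 1 := by omega
      rw [h2] at h1
      exact absurd (Nat.le_of_dvd one_pos h1) (by omega)
    have hcop : Nat.gcd (d - 1) (p ^ t) = 1 :=
      Nat.Coprime.pow_right t (Nat.coprime_comm.mp (hp.coprime_iff_not_dvd.mpr hnd))
    rw [hcop] at hne
    simp at hne
  rw [hL, h12, h3, ← Finset.sum_add_distrib]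
  apply Finset.sum_congr rfl
  intro d _
  ring
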